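/- Let n ≥ 1 and let s, t ∈ W_2 be words such that Pat(s, Λ, n) and Pat(t, Λ, n) are both defined and equal. Then the prefixes s_1⋯s_{n−1} and t_1⋯t_{n−1} agree in all but at most one position. -/
import Mathlib


/-- Infinite words over the alphabet `{0,…,k-1}`; `s i` is the letter `s_{i+1}`. -/
abbrev Word (k : ℕ) := ℕ → Fin k

/-- The number of indices `i < j` (0-indexed) with `σ_{s_i} = −` (`false` encodes `−`). -/
def negCount {k : ℕ} (σ : Fin k → Bool) (s : Word k) (j : ℕ) : ℕ :=
  ((Finset.range j).filter (fun i => σ (s i) = false)).card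

/-- The strict order `s ≺_σ t` on infinite words. -/
def sLt {k : ℕ} (σ : Fin k → Bool) (s t : Word k) : Prop :=
  ∃ j : ℕ, (∀ i < j, s i = t i) ∧ s j ≠ t j ∧
    ((Even (negCount σ s j) ∧ s j < t j) ∨ (¬ Even (negCount σ s j) ∧ t j < s j))

/-- `shiftW s i` is the word `s_{[i+1,∞)}`, i.e. the `i`-th iterate of the shift. -/
def shiftW {k : ℕ} (s : Word k) (i : ℕ) : Word k := fun m => s (m + i)

/-- `Pat(s, Σ_σ, n) = π`: the first `n` shifts of `s` are ordered according to `π`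
(0-indexed one-line notation). -/
def PatIs {k n : ℕ} (σ : Fin k → Bool) (s : Word k) (π : Equiv.Perm (Fin n)) : Prop :=
  ∀ i j : Fin n, π i < π j ↔ sLt σ (shiftW s i) (shiftW s j)

/-- The allowed patterns of length `n` of the signed shift `Σ_σ`. -/
def Allowed {k : ℕ} (σ : Fin k → Bool) (n : ℕ) : Set (Equiv.Perm (Fin n)) :=
  {π | ∃ s : Word k, PatIs σ s π}

/-- The starred cycle `ĥπ*` of `π`, as a partial map on 0-indexed positions:
position `π_i` carries value `π_{i+1}`, and position `π_n` carries `*` (i.e. `none`). -/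
def hatStar {n : ℕ} (π : Equiv.Perm (Fin n)) (p : Fin n) : Option (Fin n) :=
  if h : (π.symm p : ℕ) = n - 1 then none
  else some (π ⟨(π.symm p : ℕ) + 1, by have := (π.symm p).isLt; omega⟩)

/-- `e : ℕ → ℕ` (used on `{0,…,k}`) is a `*`-`σ`-segmentation of `ĥπ*`. -/
def IsStarSeg {k n : ℕ} (σ : Fin k → Bool) (π : Equiv.Perm (Fin n)) (e : ℕ → ℕ) : Prop :=
  e 0 = 0 ∧ e k = n ∧ Monotone e ∧
  -- (a) the non-`*` entries in the `t`-th block are increasing (σ_t = +) or decreasing (σ_t = −)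
  (∀ t : Fin k, ∀ p q : Fin n, e t ≤ (p : ℕ) → (q : ℕ) < e ((t : ℕ) + 1) → (p : ℕ) < (q : ℕ) →
    ∀ v w : Fin n, hatStar π p = some v → hatStar π q = some w →
      (if σ t = true then v < w else w < v)) ∧
  -- (b)
  (∀ (hk : 0 < k) (h0 : 0 < n) (h1 : 1 < n), σ ⟨0, hk⟩ = true →
     hatStar π ⟨0, h0⟩ = none → hatStar π ⟨1, h1⟩ = some ⟨0, h0⟩ → e 1 ≤ 1) ∧
  -- (c)
  (∀ (hk : k - 1 < k) (h0 : n - 2 < n) (h1 : n - 1 < n), σ ⟨k - 1, hk⟩ = true →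
     hatStar π ⟨n - 2, h0⟩ = some ⟨n - 1, h1⟩ → hatStar π ⟨n - 1, h1⟩ = none →
     n - 1 ≤ e (k - 1)) ∧
  -- (d)
  (∀ (hk0 : 0 < k) (hk1 : k - 1 < k) (h0 : 0 < n) (h1 : n - 2 < n) (h2 : n - 1 < n),
     σ ⟨0, hk0⟩ = false → σ ⟨k - 1, hk1⟩ = false →
     hatStar π ⟨0, h0⟩ = some ⟨n - 1, h2⟩ →
     hatStar π ⟨n - 2, h1⟩ = some ⟨0, h0⟩ → hatStar π ⟨n - 1, h2⟩ = none →
     e 1 = 0 ∨ n - 1 ≤ e (k - 1)) ∧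
  -- (e)
  (∀ (hk0 : 0 < k) (hk1 : k - 1 < k) (h0 : 0 < n) (h1 : 1 < n) (h2 : n - 1 < n),
     σ ⟨0, hk0⟩ = false → σ ⟨k - 1, hk1⟩ = false →
     hatStar π ⟨n - 1, h2⟩ = some ⟨0, h0⟩ →
     hatStar π ⟨0, h0⟩ = none → hatStar π ⟨1, h1⟩ = some ⟨n - 1, h2⟩ →
     e (k - 1) = n ∨ e 1 ≤ 1)

/-- `ĥπ* ∈ C^{σ,*}`: some `*`-`σ`-segmentation exists. -/
def InCstar {k n : ℕ} (σ : Fin k → Bool) (π : Equiv.Perm (Fin n)) : Prop :=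
  ∃ e : ℕ → ℕ, IsStarSeg σ π e

/-- The bad configuration forbidden by condition `(†)`: an integer `b ≥ 1` with `n − 2b ≥ 1`
such that `π_n` lies strictly between `π_{n−2b}` and `π_{n−b}`, and for all `1 ≤ i ≤ b` and
`0 ≤ t ≤ k−1`, `e_t < π_{n−b−i} ≤ e_{t+1}` iff `e_t < π_{n−i} ≤ e_{t+1}`.
(Values of `π` are 0-indexed, so `e_t < v ≤ e_{t+1}` becomes `e t ≤ v ∧ v < e (t+1)`.) -/
def DaggerBad (k : ℕ) {n : ℕ} (π : Equiv.Perm (Fin n)) (e : ℕ → ℕ) (b : ℕ) : Prop :=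
  ∃ (_ : 1 ≤ b) (hbn : 2 * b < n),
    (((π ⟨n - 1 - 2 * b, by omega⟩ : ℕ) < (π ⟨n - 1, by omega⟩ : ℕ) ∧
      (π ⟨n - 1, by omega⟩ : ℕ) < (π ⟨n - 1 - b, by omega⟩ : ℕ)) ∨
     ((π ⟨n - 1 - b, by omega⟩ : ℕ) < (π ⟨n - 1, by omega⟩ : ℕ) ∧
      (π ⟨n - 1, by omega⟩ : ℕ) < (π ⟨n - 1 - 2 * b, by omega⟩ : ℕ))) ∧
    (∀ i, 1 ≤ i → i ≤ b → ∀ t, t < k →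
      ((e t ≤ (π ⟨n - 1 - b - i, by omega⟩ : ℕ) ∧ (π ⟨n - 1 - b - i, by omega⟩ : ℕ) < e (t + 1)) ↔
       (e t ≤ (π ⟨n - 1 - i, by omega⟩ : ℕ) ∧ (π ⟨n - 1 - i, by omega⟩ : ℕ) < e (t + 1))))

/-- Condition `(†)`. -/
def Dagger {k n : ℕ} (σ : Fin k → Bool) (π : Equiv.Perm (Fin n)) : Prop :=
  ∃ e : ℕ → ℕ, IsStarSeg σ π e ∧ ∀ b : ℕ, ¬ DaggerBad k π e b

/-- The letter of the `π`-monotone word assigned to the (0-indexed) value `v`: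
the unique `t` with `e t ≤ v < e (t+1)` when `e` is a segmentation. -/
noncomputable def segLetter {k : ℕ} (hk : 0 < k) (e : ℕ → ℕ) (v : ℕ) : Fin k :=
  ⟨min (k - 1) (sInf {t : ℕ | v < e (t + 1)}),
   by have := Nat.min_le_left (k - 1) (sInf {t : ℕ | v < e (t + 1)}); omega⟩

/-- The `π`-monotone word `s_1 ⋯ s_n` associated to a segmentation `e`. -/
noncomputable def monoWord {k n : ℕ} (hk : 0 < k) (e : ℕ → ℕ) (π : Equiv.Perm (Fin n)) : List (Fin k) :=
  (List.finRange n).map (fun i => segLetter hk e (π i))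

/-- Prepend a finite word to an infinite word. -/
def appendW {k : ℕ} (l : List (Fin k)) (s : Word k) : Word k :=
  fun i => if h : i < l.length then l.get ⟨i, h⟩ else s (i - l.length)

/-- `n(q)`: number of negative letters of a finite word `q`. -/
def negCountL {k : ℕ} (σ : Fin k → Bool) (q : List (Fin k)) : ℕ :=
  (q.filter (fun c => σ c = false)).length

/-- The least word `w_σ` of `(W_k, ≺_σ)`. -/
def wMin {k : ℕ} (hk : 0 < k) (σ : Fin k → Bool) : Word k :=
  if σ ⟨0, hk⟩ = true then fun _ => ⟨0, hk⟩
  else if σ ⟨k - 1, by omega⟩ = true then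
    fun i => if i = 0 then ⟨0, hk⟩ else ⟨k - 1, by omega⟩
  else fun i => if i % 2 = 0 then ⟨0, hk⟩ else ⟨k - 1, by omega⟩

/-- The greatest word `W_σ` of `(W_k, ≺_σ)`. -/
def wMax {k : ℕ} (hk : 0 < k) (σ : Fin k → Bool) : Word k :=
  if σ ⟨k - 1, by omega⟩ = true then fun _ => ⟨k - 1, by omega⟩
  else if σ ⟨0, hk⟩ = true then
    fun i => if i = 0 then ⟨k - 1, by omega⟩ else ⟨0, hk⟩
  else fun i => if i % 2 = 0 then ⟨k - 1, by omega⟩ else ⟨0, hk⟩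

/-- A finite word is primitive if it is not a proper power of a shorter word. -/
def PrimitiveW {k : ℕ} (q : List (Fin k)) : Prop :=
  ¬ ∃ (r : List (Fin k)) (m : ℕ), r.length < q.length ∧ 1 < m ∧
      q = (List.replicate m r).flatten

/-- The word `s^{(1)}` (with `useMin = true`) resp. `s^{(2)}` (with `useMin = false`)
built from the `π`-monotone word of a segmentation `e` and a 0-indexed position `x0`:
`u p^{n−1}` followed by `w_σ`/`W_σ` according to the parities of `n` and `n(p)`. -/
noncomputable def buildWord {k n : ℕ} (hk : 0 < k) (σ : Fin k → Bool) (e : ℕ → ℕ)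
    (π : Equiv.Perm (Fin n)) (x0 : ℕ) (useMin : Bool) : Word k :=
  let w := monoWord hk e π
  let p := (w.take (n - 1)).drop x0
  let tail :=
    if n % 2 = 0 ∨ negCountL σ p % 2 = 0 then
      (if useMin then wMin hk σ else wMax hk σ)
    else
      (if useMin then wMax hk σ else wMin hk σ)
  appendW (w.take x0 ++ (List.replicate (n - 1) p).flatten) tail

/-- `ψ_k(t)`: the number of primitive words of length `t` over a `k`-letter alphabet. -/
noncomputable def psiW (k t : ℕ) : ℕ :=
  Set.ncard {q : List (Fin k) | q.length = t ∧ PrimitiveW q}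

/-- `a(n,k) = Σ_{t=1}^{n−1} ψ_k(t)·k^{n−t−1}`. -/
noncomputable def aNum (n k : ℕ) : ℕ :=
  ∑ t ∈ Finset.Icc 1 (n - 1), psiW k t * k ^ (n - t - 1)

/-- `I_{n,k} = a(n,k) + (k−2)k^{n−2}`, the number of allowed intervals of the `k`-shift. -/
noncomputable def INum (n k : ℕ) : ℕ := aNum n k + (k - 2) * k ^ (n - 2)

/-- The all-`+` signature, giving the `k`-shift. -/
def allPlus (k : ℕ) : Fin k → Bool := fun _ => true

/-- `b(n,2) = |A_n(Σ_2)|` and `b(n,i) = |A_n(Σ_i) \ A_n(Σ_{i−1})|` for `i ≥ 3`. -/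
noncomputable def bNum (n i : ℕ) : ℕ :=
  if i ≤ 2 then (Allowed (allPlus 2) n).ncard
  else ((Allowed (allPlus i) n) \ (Allowed (allPlus (i - 1)) n)).ncard

lemma negCount_congr' {k : ℕ} (σ : Fin k → Bool) (a b : Word k) (j : ℕ)
    (h : ∀ i < j, a i = b i) : negCount σ a j = negCount σ b j := by
  unfold negCount
  congr 1
  apply Finset.filter_congr
  intro i hi
  rw [h i (Finset.mem_range.mp hi)]

lemma negCount_succ_shift' {k : ℕ} (σ : Fin k → Bool) (u : Word k) (j : ℕ) :
    negCount σ u (j + 1) =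
      negCount σ (shiftW u 1) j + (if σ (u 0) = false then 1 else 0) := by
  induction j with
  | zero =>
      by_cases hcase : σ (u 0) = false <;>
        simp [negCount, Finset.range_one, Finset.filter_singleton, hcase]
  | succ j ih =>
      have h1 : negCount σ u (j + 2) =
          negCount σ u (j + 1) + (if σ (u (j + 1)) = false then 1 else 0) := by
        unfold negCount
        rw [Finset.range_add_one, Finset.filter_insert]
        split <;> simp [Finset.card_insert_of_notMem, Finset.notMem_range_self]
      have h2 : negCount σ (shiftW u 1) (j + 1) =
          negCount σ (shiftW u 1) j + (if σ (shiftW u 1 j) = false then 1 else 0) := by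
        unfold negCount
        rw [Finset.range_add_one, Finset.filter_insert]
        split <;> simp [Finset.card_insert_of_notMem, Finset.notMem_range_self]
      have h3 : shiftW u 1 j = u (j + 1) := rfl
      rw [h1, h2, ih, h3]
      ring

lemma shift_shift' {k : ℕ} (s : Word k) (i : ℕ) :
    shiftW (shiftW s i) 1 = shiftW s (i + 1) := by
  funext m
  show s (m + 1 + i) = s (m + (i + 1))
  congr 1
  omega

lemma fin2' : ∀ a b : Fin 2, a ≠ b → (a = 0 ∧ b = 1) ∨ (a = 1 ∧ b = 0) := by decide

lemma lemA' (u v : Word 2) (h : u 0 < v 0) : sLt ![true, false] u v :=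
  ⟨0, fun i hi => absurd hi (Nat.not_lt_zero i), ne_of_lt h,
    Or.inl ⟨by simp [negCount], h⟩⟩

lemma lemB1' (u v : Word 2) (h0 : u 0 = v 0) (ha : u 0 = 0)
    (h : sLt ![true, false] u v) : sLt ![true, false] (shiftW u 1) (shiftW v 1) := by
  obtain ⟨j, hpre, hne, hor⟩ := h
  match j, hne, hor with
  | 0, hne, hor => exact absurd h0 hne
  | j + 1, hne, hor =>
    refine ⟨j, fun i hi => hpre (i + 1) (by omega), hne, ?_⟩
    have hc : negCount ![true, false] u (j + 1) = negCount ![true, false] (shiftW u 1) j := by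
      rw [negCount_succ_shift', ha]
      simp
    rwa [hc] at hor

lemma lemB2' (u v : Word 2) (h0 : u 0 = v 0) (ha : u 0 = 1)
    (h : sLt ![true, false] u v) : sLt ![true, false] (shiftW v 1) (shiftW u 1) := by
  obtain ⟨j, hpre, hne, hor⟩ := h
  match j, hne, hor with
  | 0, hne, hor => exact absurd h0 hne
  | j + 1, hne, hor =>
    refine ⟨j, fun i hi => (hpre (i + 1) (by omega)).symm, fun hh => hne hh.symm, ?_⟩
    have hc : negCount ![true, false] u (j + 1) =
        negCount ![true, false] (shiftW u 1) j + 1 := by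
      rw [negCount_succ_shift', ha]
      simp
    have hc2 : negCount ![true, false] (shiftW v 1) j =
        negCount ![true, false] (shiftW u 1) j :=
      negCount_congr' _ _ _ _ (fun i hi => (hpre (i + 1) (by omega)).symm)
    rw [hc] at hor
    rw [hc2]
    rcases hor with ⟨he, hlt⟩ | ⟨ho, hlt⟩
    · exact Or.inr ⟨Nat.even_add_one.mp he, hlt⟩
    · exact Or.inl ⟨by_contra fun hc => ho (Nat.even_add_one.mpr hc), hlt⟩

lemma tentCore (n : ℕ) (s t : Word 2) (π : Equiv.Perm (Fin n))
    (hs : PatIs ![true, false] s π) (ht : PatIs ![true, false] t π)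
    (i j : ℕ) (hi : i + 1 < n) (hj : j + 1 < n)
    (hlt : π ⟨i, by omega⟩ < π ⟨j, by omega⟩)
    (hsi : s i = 1) (hsj : s j = 1) (hti : t i = 0) (htj : t j = 0) : False := by
  have hS : sLt ![true, false] (shiftW s i) (shiftW s j) :=
    (hs ⟨i, by omega⟩ ⟨j, by omega⟩).mp hlt
  have hT : sLt ![true, false] (shiftW t i) (shiftW t j) :=
    (ht ⟨i, by omega⟩ ⟨j, by omega⟩).mp hlt
  have hS' := lemB2' (shiftW s i) (shiftW s j)
    (by show s (0 + i) = s (0 + j); rw [Nat.zero_add, Nat.zero_add, hsi, hsj])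
    (by show s (0 + i) = 1; rw [Nat.zero_add, hsi]) hS
  rw [shift_shift', shift_shift'] at hS'
  have hT' := lemB1' (shiftW t i) (shiftW t j)
    (by show t (0 + i) = t (0 + j); rw [Nat.zero_add, Nat.zero_add, hti, htj])
    (by show t (0 + i) = 0; rw [Nat.zero_add, hti]) hT
  rw [shift_shift', shift_shift'] at hT'
  have p1 : π ⟨j + 1, hj⟩ < π ⟨i + 1, hi⟩ := (hs ⟨j + 1, hj⟩ ⟨i + 1, hi⟩).mpr hS'
  have p2 : π ⟨i + 1, hi⟩ < π ⟨j + 1, hj⟩ := (ht ⟨i + 1, hi⟩ ⟨j + 1, hj⟩).mpr hT'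
  exact absurd p2 (lt_asymm p1)

lemma tentMixed (n : ℕ) (s t : Word 2) (π : Equiv.Perm (Fin n))
    (hs : PatIs ![true, false] s π) (ht : PatIs ![true, false] t π)
    (i j : ℕ) (hi : i < n) (hj : j < n)
    (hsi : s i = 0) (hsj : s j = 1) (hti : t i = 1) (htj : t j = 0) : False := by
  have p1 : π ⟨i, hi⟩ < π ⟨j, hj⟩ := by
    refine (hs ⟨i, hi⟩ ⟨j, hj⟩).mpr (lemA' _ _ ?_)
    show s (0 + i) < s (0 + j)
    rw [Nat.zero_add, Nat.zero_add, hsi, hsj]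
    decide
  have p2 : π ⟨j, hj⟩ < π ⟨i, hi⟩ := by
    refine (ht ⟨j, hj⟩ ⟨i, hi⟩).mpr (lemA' _ _ ?_)
    show t (0 + j) < t (0 + i)
    rw [Nat.zero_add, Nat.zero_add, hti, htj]
    decide
  exact absurd p2 (lt_asymm p1)

lemma tentSame (n : ℕ) (s t : Word 2) (π : Equiv.Perm (Fin n))
    (hs : PatIs ![true, false] s π) (ht : PatIs ![true, false] t π)
    (i j : ℕ) (hi : i + 1 < n) (hj : j + 1 < n) (hij : i ≠ j)
    (hsi : s i = 1) (hsj : s j = 1) (hti : t i = 0) (htj : t j = 0) : False := by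
  have hne : (⟨i, by omega⟩ : Fin n) ≠ ⟨j, by omega⟩ := by
    simp only [ne_eq, Fin.mk.injEq]
    exact hij
  rcases (π.injective.ne hne).lt_or_gt with h | h
  · exact tentCore n s t π hs ht i j hi hj h hsi hsj hti htj
  · exact tentCore n s t π hs ht j i hj hi h hsj hsi htj hti

theorem tent_same_pattern_prefixes (n : ℕ) (hn : 1 ≤ n) (s t : Word 2)
    (π : Equiv.Perm (Fin n))
    (hs : PatIs (![true, false]) s π) (ht : PatIs (![true, false]) t π) :
    ∃ j : ℕ, ∀ i : ℕ, i < n - 1 → i ≠ j → s i = t i := by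
  by_cases hex : ∃ j, j < n - 1 ∧ s j ≠ t j
  · obtain ⟨j0, hj0, hne0⟩ := hex
    refine ⟨j0, fun i hi hij => ?_⟩
    by_contra hnei
    have hi1 : i + 1 < n := by omega
    have hj1 : j0 + 1 < n := by omega
    rcases fin2' _ _ hnei with ⟨hsi, hti⟩ | ⟨hsi, hti⟩ <;>
      rcases fin2' _ _ hne0 with ⟨hsj, htj⟩ | ⟨hsj, htj⟩
    · exact tentSame n t s π ht hs i j0 hi1 hj1 hij hti htj hsi hsj
    · exact tentMixed n s t π hs ht i j0 (by omega) (by omega) hsi hsj hti htj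
    · exact tentMixed n s t π hs ht j0 i (by omega) (by omega) hsj hsi htj hti
    · exact tentSame n s t π hs ht i j0 hi1 hj1 hij hsi hsj hti htj
  · push_neg at hex
    exact ⟨0, fun i hi _ => hex i hi⟩
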